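/- Let f : R^n → R be L-smooth and ℓ-strongly convex with minimizer x⋆, let 0 < γ ≤ 1/L, let r ∈ (0,1) and r̄ = r/(1−r). Suppose x⁺ = x − γh where the vector h satisfies ‖∇f(x) − h‖ ≤ r̄ ‖∇f(x)‖. Then f(x⁺) − f(x⋆) ≤ (1 + γL r̄² − γℓ)(f(x) − f(x⋆)). -/

import Mathlib

set_option maxHeartbeats 1000000

open InnerProductSpace

variable {n : ℕ}

local notation "E" => EuclideanSpace ℝ (Fin n)

/-- derivative along a line -/
lemma line_hasDerivAt (f : E → ℝ) (hdiff : Differentiable ℝ f) (z v : E) (t : ℝ) :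
    HasDerivAt (fun s : ℝ => f (z + s • v)) (inner ℝ (gradient f (z + t • v)) v : ℝ) t := by
  have hc : HasDerivAt (fun s : ℝ => z + s • v) v t := by
    simpa using ((hasDerivAt_id t).smul_const v).const_add z
  have hg : HasGradientAt f (gradient f (z + t • v)) (z + t • v) :=
    (hdiff _).hasGradientAt
  have hF := hasGradientAt_iff_hasFDerivAt.mp hg
  have := hF.comp_hasDerivAt t hc
  exact this.congr_deriv (by simp)

/-- descent lemma -/
lemma descent (f : E → ℝ) (L : ℝ) (hL : 0 < L) (hdiff : Differentiable ℝ f)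
    (hsmooth : ∀ x y : E, ‖gradient f x - gradient f y‖ ≤ L * ‖x - y‖) (z v : E) :
    f (z + v) ≤ f z + inner ℝ (gradient f z) v + L / 2 * ‖v‖ ^ 2 := by
  set w : ℝ := inner ℝ (gradient f z) v with hw
  set ψ : ℝ → ℝ := fun t => f (z + t • v) - t * w - L / 2 * t ^ 2 * ‖v‖ ^ 2 with hψdef
  have hψ : ∀ t : ℝ, HasDerivAt ψ
      ((inner ℝ (gradient f (z + t • v)) v : ℝ) - w - L * t * ‖v‖ ^ 2) t := by
    intro t
    have h1 : HasDerivAt (fun s : ℝ => s * w) w t := by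
      simpa using (hasDerivAt_id t).mul_const w
    have h2 : HasDerivAt (fun s : ℝ => L / 2 * s ^ 2 * ‖v‖ ^ 2) (L * t * ‖v‖ ^ 2) t := by
      have := ((hasDerivAt_pow 2 t).const_mul (L / 2)).mul_const (‖v‖ ^ 2)
      refine this.congr_deriv ?_
      rw [show (2:ℕ) - 1 = 1 from rfl]
      ring
    exact ((line_hasDerivAt f hdiff z v t).sub h1).sub h2
  have hanti : AntitoneOn ψ (Set.Icc 0 1) := by
    apply antitoneOn_of_deriv_nonpos (convex_Icc 0 1)
    · exact Continuous.continuousOn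
        (continuous_iff_continuousAt.mpr fun t => (hψ t).differentiableAt.continuousAt)
    · intro t _
      exact (hψ t).differentiableAt.differentiableWithinAt
    · intro t ht
      rw [interior_Icc] at ht
      rw [(hψ t).deriv]
      have hkey : (inner ℝ (gradient f (z + t • v)) v : ℝ) - w
          ≤ L * t * ‖v‖ ^ 2 := by
        have h1 : (inner ℝ (gradient f (z + t • v)) v : ℝ) - w
            = inner ℝ (gradient f (z + t • v) - gradient f z) v := by
          rw [inner_sub_left]
        rw [h1]
        calc (inner ℝ (gradient f (z + t • v) - gradient f z) v : ℝ)
            ≤ ‖gradient f (z + t • v) - gradient f z‖ * ‖v‖ := real_inner_le_norm _ _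
          _ ≤ L * ‖(z + t • v) - z‖ * ‖v‖ := by
              gcongr; exact hsmooth _ _
          _ = L * t * ‖v‖ ^ 2 := by
              rw [add_sub_cancel_left, norm_smul, Real.norm_eq_abs, abs_of_pos ht.1]
              ring
      linarith
  have := hanti (Set.mem_Icc.mpr ⟨le_refl 0, zero_le_one⟩)
    (Set.mem_Icc.mpr ⟨zero_le_one, le_refl 1⟩) zero_le_one
  simp only [hψdef, one_smul, zero_smul, add_zero] at this
  nlinarith [this]

/-- first-order condition for strong convexity -/
lemma strong_lower (f : E → ℝ) (ℓ : ℝ) (hdiff : Differentiable ℝ f)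
    (hstrong : StrongConvexOn Set.univ ℓ f) (z y : E) :
    (inner ℝ (gradient f z) (y - z) : ℝ) + ℓ / 2 * ‖y - z‖ ^ 2 ≤ f y - f z := by
  set φ : ℝ → ℝ := fun t => f (z + t • (y - z)) with hφdef
  have hd : HasDerivAt φ (inner ℝ (gradient f z) (y - z) : ℝ) 0 := by
    have := line_hasDerivAt f hdiff z (y - z) 0
    simpa using this
  have hslope : Filter.Tendsto (slope φ 0) (nhdsWithin 0 (Set.Ioi 0))
      (nhds (inner ℝ (gradient f z) (y - z) : ℝ)) :=
    ((hasDerivAt_iff_tendsto_slope.mp hd).mono_left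
      (nhdsWithin_mono 0 (fun t ht => ne_of_gt ht)))
  have hbound : ∀ t ∈ Set.Ioo (0:ℝ) 1,
      slope φ 0 t ≤ f y - f z - (1 - t) * (ℓ / 2 * ‖z - y‖ ^ 2) := by
    intro t ht
    have hcvx := hstrong.2 (Set.mem_univ z) (Set.mem_univ y)
      (by linarith [ht.2] : (0:ℝ) ≤ 1 - t) (le_of_lt ht.1) (by ring)
    have heq : (1 - t) • z + t • y = z + t • (y - z) := by
      rw [smul_sub]; module
    rw [heq] at hcvx
    have hslope_eq : slope φ 0 t = (φ t - φ 0) / t := by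
      rw [slope_def_field]; ring_nf
    rw [hslope_eq]
    rw [div_le_iff₀ ht.1]
    have hφ0 : φ 0 = f z := by simp [hφdef]
    simp only [smul_eq_mul] at hcvx
    rw [hφ0]
    nlinarith [ht.1, ht.2, hcvx]
  have hrhs : Filter.Tendsto (fun t : ℝ => f y - f z - (1 - t) * (ℓ / 2 * ‖z - y‖ ^ 2))
      (nhdsWithin 0 (Set.Ioi 0)) (nhds (f y - f z - ℓ / 2 * ‖z - y‖ ^ 2)) := by
    have : Filter.Tendsto (fun t : ℝ => f y - f z - (1 - t) * (ℓ / 2 * ‖z - y‖ ^ 2))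
        (nhds 0) (nhds (f y - f z - (1 - 0) * (ℓ / 2 * ‖z - y‖ ^ 2))) := by
      apply Filter.Tendsto.sub tendsto_const_nhds
      exact (Filter.Tendsto.sub tendsto_const_nhds Filter.tendsto_id).mul tendsto_const_nhds
    simpa using this.mono_left nhdsWithin_le_nhds
  have := le_of_tendsto_of_tendsto hslope hrhs
    (Filter.eventually_iff_exists_mem.mpr ⟨Set.Ioo 0 1, Ioo_mem_nhdsGT_of_mem
      (by constructor <;> norm_num), hbound⟩)
  have hnorm : ‖z - y‖ = ‖y - z‖ := norm_sub_rev _ _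
  rw [hnorm] at this
  linarith


/-- contraction under relative gradient error (Lemma 1 step). -/
theorem stmt_2 (n : ℕ) (f : EuclideanSpace ℝ (Fin n) → ℝ) (L ℓ : ℝ)
    (hL : 0 < L) (hℓ : 0 < ℓ)
    (hdiff : Differentiable ℝ f)
    (hsmooth : ∀ x y, ‖gradient f x - gradient f y‖ ≤ L * ‖x - y‖)
    (hstrong : StrongConvexOn Set.univ ℓ f)
    (xstar : EuclideanSpace ℝ (Fin n)) (hmin : IsMinOn f Set.univ xstar)
    (γ r : ℝ) (hγ0 : 0 < γ) (hγ : γ ≤ 1 / L) (hr : r ∈ Set.Ioo (0 : ℝ) 1)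
    (x h : EuclideanSpace ℝ (Fin n))
    (herr : ‖gradient f x - h‖ ≤ (r / (1 - r)) * ‖gradient f x‖) :
    f (x - γ • h) - f xstar
      ≤ (1 + γ * L * (r / (1 - r)) ^ 2 - γ * ℓ) * (f x - f xstar) := by
  set g : EuclideanSpace ℝ (Fin n) := gradient f x with hg
  set G := ‖g‖ with hG
  set Er := ‖g - h‖ with hEr
  set H := ‖h‖ with hH
  set D := f x - f xstar with hD
  set R := r / (1 - r) with hR
  set P : ℝ := inner ℝ g h with hP
  have hR0 : 0 < R := div_pos hr.1 (by linarith [hr.2])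
  have hD0 : 0 ≤ D := by
    have h1 : f xstar ≤ f x := hmin (Set.mem_univ x)
    simp only [hD]; linarith
  -- PL inequality: 2 ℓ D ≤ G ^ 2
  have hPL : 2 * ℓ * D ≤ G ^ 2 := by
    have hlow := strong_lower f ℓ hdiff hstrong x xstar
    have hinner : -(G * ‖xstar - x‖) ≤ (inner ℝ g (xstar - x) : ℝ) := by
      have h2 := abs_real_inner_le_norm g (xstar - x)
      have h3 := neg_abs_le (inner ℝ g (xstar - x) : ℝ)
      linarith
    nlinarith [sq_nonneg (ℓ * ‖xstar - x‖ - G), hlow, hinner, norm_nonneg (xstar - x)]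
  -- smoothness upper bound: G ^ 2 ≤ 2 L D
  have hUB : G ^ 2 ≤ 2 * L * D := by
    have hdes := descent f L hL hdiff hsmooth x ((-(1/L)) • g)
    have hmin' : f xstar ≤ f (x + (-(1/L)) • g) := hmin (Set.mem_univ _)
    have hin : (inner ℝ g ((-(1/L)) • g) : ℝ) = -(1/L) * G ^ 2 := by
      rw [real_inner_smul_right, real_inner_self_eq_norm_sq]
    have hnr : ‖(-(1/L)) • g‖ ^ 2 = (1/L) ^ 2 * G ^ 2 := by
      rw [norm_smul, Real.norm_eq_abs, mul_pow, abs_of_nonpos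
        (neg_nonpos.mpr (by positivity : (0:ℝ) ≤ 1/L))]
      ring_nf
      rw [hG]
    rw [hin, hnr] at hdes
    have hsimp : f x + -(1/L) * G ^ 2 + L / 2 * ((1/L) ^ 2 * G ^ 2)
        = f x - G ^ 2 / (2 * L) := by
      field_simp; ring
    rw [hsimp] at hdes
    have h4 : G ^ 2 / (2 * L) ≤ D := by simp only [hD]; linarith
    have := (div_le_iff₀ (by positivity : (0:ℝ) < 2 * L)).mp h4
    linarith
  -- descent step
  have hdes := descent f L hL hdiff hsmooth x (-(γ • h))
  have hxeq : x + -(γ • h) = x - γ • h := by abel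
  rw [hxeq] at hdes
  have hin : (inner ℝ g (-(γ • h)) : ℝ) = -(γ * P) := by
    rw [inner_neg_right, real_inner_smul_right]
  have hnr : ‖-(γ • h)‖ ^ 2 = γ ^ 2 * H ^ 2 := by
    rw [norm_neg, norm_smul, Real.norm_eq_abs, mul_pow, abs_of_pos hγ0]
  rw [hin, hnr] at hdes
  have hid : Er ^ 2 = G ^ 2 - 2 * P + H ^ 2 := by
    rw [hEr, hG, hH, hP, norm_sub_sq_real]
  have hE2 : Er ^ 2 ≤ R ^ 2 * G ^ 2 := by
    nlinarith [norm_nonneg (g - h), herr, hR0.le, norm_nonneg g]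
  have hγL : γ * L ≤ 1 := by
    have := (le_div_iff₀ hL).mp hγ; linarith
  -- assemble
  have step1 : L / 2 * (γ ^ 2 * H ^ 2) ≤ γ / 2 * H ^ 2 := by
    nlinarith [mul_le_mul_of_nonneg_right hγL (mul_nonneg hγ0.le (sq_nonneg H))]
  have e2 : γ * Er ^ 2 = γ * (G ^ 2 - 2 * P + H ^ 2) := by rw [hid]
  have step3 : γ * Er ^ 2 ≤ γ * (R ^ 2 * G ^ 2) :=
    mul_le_mul_of_nonneg_left hE2 hγ0.le
  have step4 : γ * (R ^ 2 * G ^ 2) ≤ γ * (R ^ 2 * (2 * L * D)) :=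
    mul_le_mul_of_nonneg_left (mul_le_mul_of_nonneg_left hUB (sq_nonneg R)) hγ0.le
  have step5 : γ * (2 * ℓ * D) ≤ γ * G ^ 2 := mul_le_mul_of_nonneg_left hPL hγ0.le
  have hgoal : f (x - γ • h) - f xstar
      ≤ (1 + γ * L * R ^ 2 - γ * ℓ) * D := by
    linarith [hdes, step1, e2, step3, step4, step5]
  simpa only [hR, hD] using hgoal
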